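/- Let C₀ > 0 and M₂ ≥ 0 be real numbers. Then the amplification factor σ(h,k) = 1 − h C₀ k⁴ / (1 + h M₂ k⁴) of the biharmonic-modified scheme satisfies |σ(h,k)| ≤ 1 for every time-step h > 0 and every wavenumber k ∈ ℝ if and only if M₂ ≥ C₀/2. (This is the unconditional linear stability criterion for the biharmonic-modified splitting.) -/

import Mathlib

/-- Unconditional linear stability criterion for the biharmonic-modified (BHM) splitting:
the amplification factor `σ(h,k) = 1 − h C₀ k⁴ / (1 + h M₂ k⁴)` satisfies `|σ(h,k)| ≤ 1`
for every time-step `h > 0` and every wavenumber `k ∈ ℝ` if and only if `M₂ ≥ C₀ / 2`. -/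
theorem bhm_unconditional_linear_stability (C₀ M₂ : ℝ) (hC₀ : 0 < C₀) (hM₂ : 0 ≤ M₂) :
    (∀ h k : ℝ, 0 < h → |1 - h * C₀ * k ^ 4 / (1 + h * M₂ * k ^ 4)| ≤ 1) ↔ M₂ ≥ C₀ / 2 := by
  constructor
  · intro H
    by_contra hlt
    push_neg at hlt
    have hd : 0 < C₀ - 2 * M₂ := by linarith
    set h : ℝ := 3 / (C₀ - 2 * M₂) with hh
    have hhpos : 0 < h := by positivity
    have hden : 0 < 1 + h * M₂ * 1 ^ 4 := by positivity
    have := H h 1 hhpos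
    rw [abs_le] at this
    have h1 : -1 ≤ 1 - h * C₀ * 1 ^ 4 / (1 + h * M₂ * 1 ^ 4) := this.1
    have h2 : h * C₀ * 1 ^ 4 / (1 + h * M₂ * 1 ^ 4) ≤ 2 := by linarith
    rw [div_le_iff₀ hden] at h2
    have h3 : h * (C₀ - 2 * M₂) = 3 := by
      rw [hh, div_mul_cancel₀ _ hd.ne']
    nlinarith
  · intro hge h k hh
    have hk4 : 0 ≤ k ^ 4 := by positivity
    have hden : 0 < 1 + h * M₂ * k ^ 4 := by positivity
    rw [abs_le]
    constructor
    · have : h * C₀ * k ^ 4 ≤ 2 * (1 + h * M₂ * k ^ 4) := by nlinarith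
      have := (div_le_iff₀ hden).mpr this
      linarith
    · have hnum : 0 ≤ h * C₀ * k ^ 4 := by positivity
      have : 0 ≤ h * C₀ * k ^ 4 / (1 + h * M₂ * k ^ 4) := div_nonneg hnum hden.le
      linarith
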